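/- Let $X_1,\dots,X_n$ be independent identically distributed real-valued random variables with distribution function $F$ and order statistics $X_{1:n}\le\dots\le X_{n:n}$, let $k,\delta>0$ with $\rho=k/\delta>1$ non-integer, $n\ge 2\rho+1$, and $\mathbf{E}|X_1|^{\delta}<\infty$. Then for $i=\lfloor\rho\rfloor+1$, one has $\mathbf{E}|X_{i:n}|^k \le (\mathbf{E}|X_1|^{\delta})^{\rho}\,\dfrac{n^{\rho}}{\lfloor\rho\rfloor!}\Bigl(\dfrac{n}{\,n-2\lfloor\rho\rfloor\,}\Bigr)^{\lfloor\rho\rfloor+1-\rho}$. -/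

import Mathlib

open MeasureTheory ProbabilityTheory

/-- Expectation of a product of independent `ℝ≥0∞`-valued random variables over a finset. -/
lemma lintegral_finset_prod_of_iIndepFun {Ω : Type*} [MeasurableSpace Ω] (μ : Measure Ω)
    [IsProbabilityMeasure μ] {n : ℕ} {W : Fin n → Ω → ENNReal}
    (hW : ∀ l, Measurable (W l))
    (hind : iIndepFun W μ) (s : Finset (Fin n)) :
    ∫⁻ ω, ∏ l ∈ s, W l ω ∂μ = ∏ l ∈ s, ∫⁻ ω, W l ω ∂μ := by
  classical
  induction s using Finset.induction_on with
  | empty => simp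
  | @insert a s ha ih =>
    have hprod : Measurable (fun ω => ∏ l ∈ s, W l ω) :=
      Finset.measurable_prod s fun l _ => hW l
    have hindep : IndepFun (fun ω => ∏ l ∈ s, W l ω) (W a) μ := by
      have := hind.indepFun_finset_prod_of_notMem hW ha
      simpa [Finset.prod_fn] using this
    calc ∫⁻ ω, ∏ l ∈ insert a s, W l ω ∂μ
        = ∫⁻ ω, (fun ω => ∏ l ∈ s, W l ω) ω * W a ω ∂μ := by
          simp_rw [Finset.prod_insert ha]; simp [mul_comm]
      _ = (∫⁻ ω, ∏ l ∈ s, W l ω ∂μ) * ∫⁻ ω, W a ω ∂μ :=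
          lintegral_mul_eq_lintegral_mul_lintegral_of_indepFun''
            hprod.aemeasurable (hW a).aemeasurable hindep
      _ = ∏ l ∈ insert a s, ∫⁻ ω, W l ω ∂μ := by
          rw [Finset.prod_insert ha, ih, mul_comm]

/-- If `y` is a monotone rearrangement of `x` and `i` has 1-based rank `m+1` with
`n ≥ 2m+2`, then at least `m+1` of the `x l` dominate `|y i|` in absolute value. -/
lemma exists_card_abs_ge {n m : ℕ} (hn2 : 2 * m + 2 ≤ n) (x y : Fin n → ℝ)
    (hmono : Monotone y) (σ : Equiv.Perm (Fin n)) (hσ : ∀ j, y j = x (σ j))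
    (i : Fin n) (hi : (i : ℕ) = m) :
    ∃ S : Finset (Fin n), S.card = m + 1 ∧ ∀ l ∈ S, |y i| ≤ |x l| := by
  classical
  by_cases h0 : 0 ≤ y i
  · have hTcard : (Finset.Ici i).card = n - m := by rw [Fin.card_Ici, hi]
    have hle : m + 1 ≤ (Finset.Ici i).card := by omega
    obtain ⟨T, hTsub, hTcard'⟩ := Finset.exists_subset_card_eq hle
    refine ⟨T.image σ, ?_, ?_⟩
    · rw [Finset.card_image_of_injective _ σ.injective, hTcard']
    · intro l hl
      obtain ⟨j, hj, rfl⟩ := Finset.mem_image.mp hl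
      have hji : i ≤ j := Finset.mem_Ici.mp (hTsub hj)
      rw [← hσ j, abs_of_nonneg h0]
      exact le_trans (hmono hji) (le_abs_self _)
  · push_neg at h0
    have hTcard : (Finset.Iic i).card = m + 1 := by rw [Fin.card_Iic, hi]
    refine ⟨(Finset.Iic i).image σ, ?_, ?_⟩
    · rw [Finset.card_image_of_injective _ σ.injective, hTcard]
    · intro l hl
      obtain ⟨j, hj, rfl⟩ := Finset.mem_image.mp hl
      have hji : j ≤ i := Finset.mem_Iic.mp hj
      rw [← hσ j, abs_of_neg h0]
      exact le_trans (neg_le_neg (hmono hji)) (neg_le_abs _)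

theorem stmt_14 {Ω : Type*} [MeasurableSpace Ω] (μ : Measure Ω) [IsProbabilityMeasure μ]
    (n : ℕ) (hn : 0 < n) (X Y : Fin n → Ω → ℝ)
    (hmeas : ∀ j, Measurable (X j))
    (hindep : iIndepFun X μ)
    (hident : ∀ j, μ.map (X j) = μ.map (X ⟨0, hn⟩))
    (hsort : ∀ ω, Monotone fun j => Y j ω)
    (hperm : ∀ ω, ∃ σ : Equiv.Perm (Fin n), ∀ j, Y j ω = X (σ j) ω)
    (k δ : ℝ) (hk : 0 < k) (hδ : 0 < δ)
    (m : ℕ) (hm : 1 ≤ m) (hm1 : (m : ℝ) < k / δ) (hm2 : k / δ < (m : ℝ) + 1)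
    (hnρ : 2 * (k / δ) + 1 ≤ (n : ℝ))
    (hmom : Integrable (fun ω => |X ⟨0, hn⟩ ω| ^ δ) μ)
    (i : Fin n) (hi : (i : ℕ) = m) :
    ∫⁻ ω, ENNReal.ofReal (|Y i ω| ^ k) ∂μ ≤
      ENNReal.ofReal ((∫ ω, |X ⟨0, hn⟩ ω| ^ δ ∂μ) ^ (k / δ) *
        ((n : ℝ) ^ (k / δ) / (m.factorial : ℝ) *
          ((n : ℝ) / ((n : ℝ) - 2 * m)) ^ ((m : ℝ) + 1 - k / δ))) := by
  classical
  set ρ : ℝ := k / δ with hρdef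
  set lam : ℝ := (m : ℝ) + 1 - ρ with hlamdef
  have hρpos : 0 < ρ := div_pos hk hδ
  have hlam0 : 0 < lam := by rw [hlamdef]; linarith
  have hlam1 : lam < 1 := by rw [hlamdef]; linarith
  have hn2 : 2 * m + 2 ≤ n := by
    have h1 : (2 * m + 1 : ℝ) < n := by linarith
    have h2 : 2 * m + 1 < n := by exact_mod_cast h1
    omega
  set x0 : Fin n := ⟨0, hn⟩ with hx0
  set a : ℝ := ∫ ω, |X x0 ω| ^ δ ∂μ with hadef
  have ha : 0 ≤ a := integral_nonneg fun ω => Real.rpow_nonneg (abs_nonneg _) _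
  set g : ℝ → ENNReal := fun x => ENNReal.ofReal (|x| ^ δ) with hgdef
  have hgmeas : Measurable g := (measurable_abs.pow_const δ).ennreal_ofReal
  set W : Fin n → Ω → ENNReal := fun l => g ∘ X l with hWdef
  have hWmeas : ∀ l, Measurable (W l) := fun l => hgmeas.comp (hmeas l)
  have hWindep : iIndepFun W μ :=
    hindep.comp (fun _ => g) (fun _ => hgmeas)
  have hW1 : ∀ l, ∫⁻ ω, W l ω ∂μ = ENNReal.ofReal a := by
    intro l
    have h1 : ∫⁻ ω, W l ω ∂μ = ∫⁻ x, g x ∂(μ.map (X l)) :=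
      (lintegral_map hgmeas (hmeas l)).symm
    rw [h1, hident l, lintegral_map hgmeas (hmeas x0)]
    exact (ofReal_integral_eq_lintegral_ofReal hmom
      (Filter.Eventually.of_forall fun ω => Real.rpow_nonneg (abs_nonneg _) _)).symm
  set F : ℕ → Ω → ENNReal := fun j ω => ∑ S ∈ Finset.univ.powersetCard j, ∏ l ∈ S, W l ω
    with hFdef
  have hFmeas : ∀ j, Measurable (F j) := fun j =>
    Finset.measurable_sum _ (fun S _ => Finset.measurable_prod S fun l _ => hWmeas l)
  have hFint : ∀ j, ∫⁻ ω, F j ω ∂μ = (n.choose j : ENNReal) * (ENNReal.ofReal a) ^ j := by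
    intro j
    rw [hFdef]
    rw [lintegral_finset_sum _ (fun S _ => Finset.measurable_prod S fun l _ => hWmeas l)]
    have hterm : ∀ S ∈ Finset.univ.powersetCard j,
        ∫⁻ ω, ∏ l ∈ S, W l ω ∂μ = (ENNReal.ofReal a) ^ j := by
      intro S hS
      rw [lintegral_finset_prod_of_iIndepFun μ hWmeas hWindep S]
      have hcard : S.card = j := (Finset.mem_powersetCard.mp hS).2
      simp only [hW1, Finset.prod_const, hcard]
    rw [Finset.sum_congr rfl hterm, Finset.sum_const, Finset.card_powersetCard,
      Finset.card_univ, Fintype.card_fin, nsmul_eq_mul]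
  -- pointwise bound
  have hpt : ∀ ω, ENNReal.ofReal (|Y i ω| ^ k) ≤ (F m ω) ^ lam * (F (m+1) ω) ^ (1 - lam) := by
    intro ω
    obtain ⟨σ, hσ⟩ := hperm ω
    obtain ⟨S, hScard, hSle⟩ := exists_card_abs_ge hn2 (fun l => X l ω) (fun j => Y j ω)
      (hsort ω) σ hσ i hi
    set u : ENNReal := ENNReal.ofReal (|Y i ω| ^ δ) with hudef
    have hkey : ∀ j, j ≤ m + 1 → u ^ j ≤ F j ω := by
      intro j hj
      obtain ⟨T, hTS, hTcard⟩ := Finset.exists_subset_card_eq (hScard ▸ hj : j ≤ S.card)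
      have h1 : u ^ j = ∏ _l ∈ T, u := by rw [Finset.prod_const, hTcard]
      have h2 : ∏ _l ∈ T, u ≤ ∏ l ∈ T, W l ω := by
        refine Finset.prod_le_prod' fun l hl => ?_
        exact ENNReal.ofReal_le_ofReal
          (Real.rpow_le_rpow (abs_nonneg _) (hSle l (hTS hl)) hδ.le)
      have h3 : ∏ l ∈ T, W l ω ≤ F j ω := by
        refine Finset.single_le_sum (f := fun S => ∏ l ∈ S, W l ω)
          (fun _ _ => zero_le) ?_
        exact Finset.mem_powersetCard.mpr ⟨Finset.subset_univ T, hTcard⟩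
      calc u ^ j = ∏ _l ∈ T, u := h1
        _ ≤ ∏ l ∈ T, W l ω := h2
        _ ≤ F j ω := h3
    have heq : ENNReal.ofReal (|Y i ω| ^ k) = u ^ ρ := by
      have h1 : |Y i ω| ^ k = (|Y i ω| ^ δ) ^ ρ := by
        rw [← Real.rpow_mul (abs_nonneg _)]
        congr 1
        rw [hρdef]; field_simp
      rw [h1, hudef,
        ENNReal.ofReal_rpow_of_nonneg (Real.rpow_nonneg (abs_nonneg _) _) hρpos.le]
    rw [heq]
    rcases eq_or_ne u 0 with hu0 | hu0
    · rw [hu0, ENNReal.zero_rpow_of_pos hρpos]; exact zero_le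
    have hutop : u ≠ ⊤ := ENNReal.ofReal_ne_top
    have hsplit : u ^ ρ = (u ^ m) ^ lam * (u ^ (m+1)) ^ (1 - lam) := by
      rw [← ENNReal.rpow_natCast u m, ← ENNReal.rpow_natCast u (m+1),
        ← ENNReal.rpow_mul, ← ENNReal.rpow_mul, ← ENNReal.rpow_add _ _ hu0 hutop]
      congr 1
      rw [hlamdef]; push_cast; ring
    rw [hsplit]
    exact mul_le_mul' (ENNReal.rpow_le_rpow (hkey m (by omega)) hlam0.le)
      (ENNReal.rpow_le_rpow (hkey (m+1) le_rfl) (by linarith))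
  -- Hölder
  have hconj : (1/lam).HolderConjugate (1/(1-lam)) := by
    constructor
    · simp only [one_div, inv_inv, inv_one]; ring
    · exact one_div_pos.mpr hlam0
    · exact one_div_pos.mpr (by linarith)
  have hsimp1 : ∀ ω, ((F m ω) ^ lam) ^ (1/lam) = F m ω := fun ω => by
    rw [← ENNReal.rpow_mul, mul_one_div, div_self hlam0.ne', ENNReal.rpow_one]
  have hsimp2 : ∀ ω, ((F (m+1) ω) ^ (1-lam)) ^ (1/(1-lam)) = F (m+1) ω := fun ω => by
    rw [← ENNReal.rpow_mul, mul_one_div, div_self (by linarith : (1:ℝ) - lam ≠ 0),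
      ENNReal.rpow_one]
  have hHolder : ∫⁻ ω, (F m ω) ^ lam * (F (m+1) ω) ^ (1-lam) ∂μ ≤
      (∫⁻ ω, F m ω ∂μ) ^ lam * (∫⁻ ω, F (m+1) ω ∂μ) ^ (1-lam) := by
    have h := ENNReal.lintegral_mul_le_Lp_mul_Lq μ hconj
      (f := fun ω => (F m ω) ^ lam) (g := fun ω => (F (m+1) ω) ^ (1-lam))
      ((hFmeas m).pow_const lam).aemeasurable
      ((hFmeas (m+1)).pow_const (1-lam)).aemeasurable
    simp only [Pi.mul_apply] at h
    simp only [hsimp1, hsimp2, one_div_one_div] at h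
    exact h
  -- main computation
  have hc1 : ((n.choose m : ℝ)) ≤ (n:ℝ)^m / (m.factorial : ℝ) := by
    rw [le_div_iff₀ (by positivity : (0:ℝ) < (m.factorial : ℝ))]
    have h1 := Nat.descFactorial_le_pow n m
    rw [Nat.descFactorial_eq_factorial_mul_choose] at h1
    calc ((n.choose m : ℝ)) * (m.factorial : ℝ)
        = ((m.factorial * n.choose m : ℕ) : ℝ) := by push_cast; ring
      _ ≤ ((n^m : ℕ) : ℝ) := by exact_mod_cast h1
      _ = (n:ℝ)^m := by push_cast; ring
  have hc2 : ((n.choose (m+1) : ℝ)) ≤ (n:ℝ)^(m+1) / (m.factorial : ℝ) := by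
    rw [le_div_iff₀ (by positivity : (0:ℝ) < (m.factorial : ℝ))]
    have h1 := Nat.descFactorial_le_pow n (m+1)
    rw [Nat.descFactorial_eq_factorial_mul_choose] at h1
    have h2 : m.factorial * n.choose (m+1) ≤ (m+1).factorial * n.choose (m+1) :=
      Nat.mul_le_mul_right _ (Nat.factorial_le (by omega))
    calc ((n.choose (m+1) : ℝ)) * (m.factorial : ℝ)
        = ((m.factorial * n.choose (m+1) : ℕ) : ℝ) := by push_cast; ring
      _ ≤ (((m+1).factorial * n.choose (m+1) : ℕ) : ℝ) := by exact_mod_cast h2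
      _ ≤ ((n^(m+1) : ℕ) : ℝ) := by exact_mod_cast h1
      _ = (n:ℝ)^(m+1) := by push_cast; ring
  have hnpos : (0:ℝ) < n := by exact_mod_cast hn
  have hn2m : (0:ℝ) < (n:ℝ) - 2*m := by
    have : ((2*m+2 : ℕ) : ℝ) ≤ n := by exact_mod_cast hn2
    push_cast at this; linarith
  have hfacpos : (0:ℝ) < (m.factorial : ℝ) := by positivity
  have hsum : (m:ℝ) * lam + ((m:ℝ)+1) * (1-lam) = ρ := by rw [hlamdef]; ring
  have hfinal : ((n.choose m : ℝ) * a^m) ^ lam * ((n.choose (m+1) : ℝ) * a^(m+1)) ^ (1-lam) ≤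
      a ^ ρ * ((n:ℝ)^ρ / (m.factorial : ℝ) * ((n:ℝ)/((n:ℝ) - 2*m)) ^ lam) := by
    have hAa : (a^m) ^ lam * (a^(m+1)) ^ (1-lam) = a ^ ρ := by
      rw [← Real.rpow_natCast a m, ← Real.rpow_natCast a (m+1),
        ← Real.rpow_mul ha, ← Real.rpow_mul ha,
        ← Real.rpow_add' ha (by push_cast; rw [hsum]; exact hρpos.ne')]
      congr 1
      push_cast
      linarith [hsum]
    have hBn : ((n:ℝ)^m / (m.factorial:ℝ)) ^ lam * ((n:ℝ)^(m+1) / (m.factorial:ℝ)) ^ (1-lam)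
        = (n:ℝ)^ρ / (m.factorial : ℝ) := by
      rw [Real.div_rpow (by positivity) hfacpos.le, Real.div_rpow (by positivity) hfacpos.le,
        div_mul_div_comm]
      congr 1
      · rw [← Real.rpow_natCast (n:ℝ) m, ← Real.rpow_natCast (n:ℝ) (m+1),
          ← Real.rpow_mul hnpos.le, ← Real.rpow_mul hnpos.le,
          ← Real.rpow_add' hnpos.le (by push_cast; rw [hsum]; exact hρpos.ne')]
        congr 1
        push_cast
        linarith [hsum]
      · rw [← Real.rpow_add hfacpos]
        norm_num
    have hB : (n.choose m : ℝ) ^ lam * (n.choose (m+1) : ℝ) ^ (1-lam) ≤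
        (n:ℝ)^ρ / (m.factorial : ℝ) * ((n:ℝ)/((n:ℝ) - 2*m)) ^ lam := by
      have hb1 : (n.choose m : ℝ) ^ lam ≤ ((n:ℝ)^m / (m.factorial:ℝ)) ^ lam :=
        Real.rpow_le_rpow (by positivity) hc1 hlam0.le
      have hb2 : (n.choose (m+1) : ℝ) ^ (1-lam) ≤ ((n:ℝ)^(m+1) / (m.factorial:ℝ)) ^ (1-lam) :=
        Real.rpow_le_rpow (by positivity) hc2 (by linarith)
      have h3 : (n.choose m : ℝ) ^ lam * (n.choose (m+1) : ℝ) ^ (1-lam) ≤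
          (n:ℝ)^ρ / (m.factorial : ℝ) := by
        rw [← hBn]
        exact mul_le_mul hb1 hb2 (by positivity) (by positivity)
      refine h3.trans (le_mul_of_one_le_right (by positivity) ?_)
      exact Real.one_le_rpow ((one_le_div hn2m).mpr (by linarith)) hlam0.le
    calc ((n.choose m : ℝ) * a^m) ^ lam * ((n.choose (m+1) : ℝ) * a^(m+1)) ^ (1-lam)
        = ((n.choose m : ℝ) ^ lam * (n.choose (m+1) : ℝ) ^ (1-lam)) *
          ((a^m) ^ lam * (a^(m+1)) ^ (1-lam)) := by
          rw [Real.mul_rpow (by positivity) (by positivity),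
            Real.mul_rpow (by positivity) (by positivity)]
          ring
      _ = ((n.choose m : ℝ) ^ lam * (n.choose (m+1) : ℝ) ^ (1-lam)) * a ^ ρ := by rw [hAa]
      _ ≤ ((n:ℝ)^ρ / (m.factorial : ℝ) * ((n:ℝ)/((n:ℝ) - 2*m)) ^ lam) * a ^ ρ :=
          mul_le_mul_of_nonneg_right hB (Real.rpow_nonneg ha ρ)
      _ = a ^ ρ * ((n:ℝ)^ρ / (m.factorial : ℝ) * ((n:ℝ)/((n:ℝ) - 2*m)) ^ lam) := by ring
  calc ∫⁻ ω, ENNReal.ofReal (|Y i ω| ^ k) ∂μ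
      ≤ ∫⁻ ω, (F m ω) ^ lam * (F (m+1) ω) ^ (1-lam) ∂μ := lintegral_mono hpt
    _ ≤ (∫⁻ ω, F m ω ∂μ) ^ lam * (∫⁻ ω, F (m+1) ω ∂μ) ^ (1-lam) := hHolder
    _ = ((n.choose m : ENNReal) * (ENNReal.ofReal a) ^ m) ^ lam *
        ((n.choose (m+1) : ENNReal) * (ENNReal.ofReal a) ^ (m+1)) ^ (1-lam) := by
        rw [hFint m, hFint (m+1)]
    _ = ENNReal.ofReal (((n.choose m : ℝ) * a^m) ^ lam *
        ((n.choose (m+1) : ℝ) * a^(m+1)) ^ (1-lam)) := by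
        rw [← ENNReal.ofReal_pow ha, ← ENNReal.ofReal_pow ha,
          ← ENNReal.ofReal_natCast (n.choose m), ← ENNReal.ofReal_natCast (n.choose (m+1)),
          ← ENNReal.ofReal_mul (by positivity), ← ENNReal.ofReal_mul (by positivity),
          ENNReal.ofReal_rpow_of_nonneg (by positivity) hlam0.le,
          ENNReal.ofReal_rpow_of_nonneg (by positivity) (by linarith),
          ← ENNReal.ofReal_mul (by positivity)]
    _ ≤ ENNReal.ofReal (a ^ ρ * ((n:ℝ)^ρ / (m.factorial : ℝ) *
        ((n:ℝ)/((n:ℝ) - 2*m)) ^ lam)) := ENNReal.ofReal_le_ofReal hfinal
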